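/- If K/k is a separable field extension of degree 2, T is the image of K* in GL(2,k) under the regular representation, and g ∈ GL(2,k), then there exist t, t' ∈ T with g⁻¹ = t g t'. Consequently, every subsemigroup of GL(2,k) containing T is a subgroup. -/

import Mathlib

open Polynomial

lemma aux_conj {k K : Type*} [Field k] [Field K] [Algebra k K]
    [Algebra.IsSeparable k K] (hdeg : Module.finrank k K = 2) (b : Module.Basis (Fin 2) k K) :
    ∃ (σ : K →ₐ[k] K) (d : K), (∀ y, σ (σ y) = y) ∧ d ≠ 0 ∧ σ d = -d ∧
      (∀ f : K →ₗ[k] K, ∃ a c : K, ∀ x, f x = a * x + c * σ x) ∧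
      (∀ p q : K, (∀ x, p * x + q * σ x = 0) → p = 0 ∧ q = 0) := by
  have : FiniteDimensional k K := Module.Finite.of_basis b
  set pb := Field.powerBasisOfFiniteOfSeparable k K with hpb
  set α := pb.gen with hα
  have hint : IsIntegral k α := pb.isIntegral_gen
  set p := minpoly k α with hp
  have hmonic : p.Monic := minpoly.monic hint
  have hdim : pb.dim = 2 := pb.finrank.symm.trans hdeg
  have hpdeg : p.natDegree = 2 := pb.natDegree_minpoly.trans hdim
  have hpeq : p = X ^ 2 + C (p.coeff 1) * X + C (p.coeff 0) := by
    ext n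
    rcases n with _ | _ | _ | n
    · simp
    · simp
    · have h2 := hmonic.coeff_natDegree
      rw [hpdeg] at h2
      simp [coeff_X_pow, h2]
    · simp [coeff_eq_zero_of_natDegree_lt (show p.natDegree < n + 3 by omega), coeff_X_pow]
  have hroot : α ^ 2 + algebraMap k K (p.coeff 1) * α + algebraMap k K (p.coeff 0) = 0 := by
    have h0 := minpoly.aeval k α
    rw [← hp, hpeq] at h0
    simpa using h0
  set a1 := algebraMap k K (p.coeff 1) with ha1
  set α' := -a1 - α with hα'
  have hroot' : aeval α' p = 0 := by
    rw [hpeq]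
    simp only [map_add, map_mul, map_pow, aeval_X, aeval_C]
    rw [← ha1, hα']
    linear_combination hroot
  have hne : α' ≠ α := by
    intro h
    obtain ⟨u, v, huv⟩ := Algebra.IsSeparable.isSeparable k α
    have hder : aeval α (derivative p) = 0 := by
      rw [hpeq]
      simp only [derivative_add, derivative_mul, derivative_X_pow, derivative_C, derivative_X,
        map_add, map_mul, map_pow, map_zero, map_one, aeval_X, aeval_C, mul_zero, zero_mul,
        add_zero, zero_add, mul_one, Nat.cast_ofNat, map_ofNat]
      have h2 : α = -a1 - α := by rw [← hα']; exact h.symm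
      rw [← ha1]
      linear_combination h2
    have := congrArg (aeval α) huv
    rw [map_add, map_mul, map_mul, ← hp, minpoly.aeval, hder, map_one] at this
    simp at this
  let σ : K →ₐ[k] K := pb.lift α' hroot'
  have hσα : σ α = α' := pb.lift_gen α' hroot'
  have hσa1 : σ a1 = a1 := by rw [ha1]; exact σ.commutes _
  have hσα' : σ α' = α := by
    rw [hα', map_sub, map_neg, hσa1, hσα, hα']; ring
  have hσσ : ∀ y, σ (σ y) = y := by
    have hcomp : σ.comp σ = AlgHom.id k K := by
      apply pb.algHom_ext
      rw [AlgHom.comp_apply]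
      rw [← hα, hσα, hσα']
      rfl
    intro y
    exact DFunLike.congr_fun hcomp y
  have hd : α - α' ≠ 0 := sub_ne_zero.mpr (Ne.symm hne)
  have hσd : σ (α - α') = -(α - α') := by rw [map_sub, hσα, hσα']; ring
  have hαα' : α' - α ≠ 0 := sub_ne_zero.mpr hne
  refine ⟨σ, α - α', hσσ, hd, hσd, ?_, ?_⟩
  · intro f
    obtain ⟨c, hc⟩ : ∃ c : K, c * (α' - α) = f α - α * f 1 :=
      ⟨(f α - α * f 1) / (α' - α), div_mul_cancel₀ _ hαα'⟩
    refine ⟨f 1 - c, c, ?_⟩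
    have hfg : f = (f 1 - c) • LinearMap.id + c • σ.toLinearMap := by
      apply pb.basis.ext
      intro i
      have hi : (i : ℕ) = 0 ∨ (i : ℕ) = 1 := by
        have hlt := i.isLt
        omega
      rw [pb.coe_basis, ← hα]
      rcases hi with hi | hi <;> simp only [hi]
      · simp only [pow_zero, LinearMap.add_apply, LinearMap.smul_apply, LinearMap.id_apply,
          AlgHom.toLinearMap_apply, map_one, smul_eq_mul]
        ring
      · simp only [pow_one, LinearMap.add_apply, LinearMap.smul_apply, LinearMap.id_apply,
          AlgHom.toLinearMap_apply, smul_eq_mul, hσα]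
        linear_combination -hc
    intro x
    conv_lhs => rw [hfg]
    simp only [LinearMap.add_apply, LinearMap.smul_apply, LinearMap.id_apply,
      AlgHom.toLinearMap_apply, smul_eq_mul]
  · intro pp q h
    have h1 := h 1
    rw [map_one, mul_one, mul_one] at h1
    have h2 := h α
    rw [hσα] at h2
    have hp0 : pp * (α - α') = 0 := by linear_combination h2 - α' * h1
    have hpp : pp = 0 := by
      rcases mul_eq_zero.mp hp0 with h' | h'
      · exact h'
      · exact absurd h' hd
    refine ⟨hpp, ?_⟩
    linear_combination h1 - hpp

theorem nonsplit_torus_semigroup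
    {k K : Type*} [Field k] [Field K] [Algebra k K]
    [Algebra.IsSeparable k K] (hdeg : Module.finrank k K = 2)
    (b : Module.Basis (Fin 2) k K) :
    (∀ g : (Matrix (Fin 2) (Fin 2) k)ˣ, ∃ t t' : K, t ≠ 0 ∧ t' ≠ 0 ∧
        (g⁻¹).val = Algebra.leftMulMatrix b t * g.val * Algebra.leftMulMatrix b t') ∧
      ∀ S : Subsemigroup (Matrix (Fin 2) (Fin 2) k)ˣ,
        (∀ u : (Matrix (Fin 2) (Fin 2) k)ˣ,
          (∃ x : K, x ≠ 0 ∧ u.val = Algebra.leftMulMatrix b x) → u ∈ S) →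
        ∃ H : Subgroup (Matrix (Fin 2) (Fin 2) k)ˣ,
          (H : Set (Matrix (Fin 2) (Fin 2) k)ˣ) = (S : Set (Matrix (Fin 2) (Fin 2) k)ˣ) := by
  obtain ⟨σ, d, hσσ, hd, hσd, decomp, uniq⟩ := aux_conj hdeg b
  have hσ0 : ∀ y : K, σ y = 0 → y = 0 := fun y hy => by
    rw [← hσσ y, hy, map_zero]
  have main : ∀ g : (Matrix (Fin 2) (Fin 2) k)ˣ, ∃ t t' : K, t ≠ 0 ∧ t' ≠ 0 ∧
      (g⁻¹).val = Algebra.leftMulMatrix b t * g.val * Algebra.leftMulMatrix b t' := by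
    intro g
    set f : K →ₗ[k] K := Matrix.toLin b b g.val with hf
    set f' : K →ₗ[k] K := Matrix.toLin b b (g⁻¹).val with hf'
    have hff' : ∀ x, f (f' x) = x := by
      intro x
      have h1 : g.val * (g⁻¹).val = 1 := g.mul_inv
      have h2 : Matrix.toLin b b (g.val * (g⁻¹).val) = LinearMap.id := by
        rw [h1, Matrix.toLin_one]
      rw [Matrix.toLin_mul b b b] at h2
      exact DFunLike.congr_fun h2 x
    have hf'f : ∀ x, f' (f x) = x := by
      intro x
      have h1 : (g⁻¹).val * g.val = 1 := g.inv_mul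
      have h2 : Matrix.toLin b b ((g⁻¹).val * g.val) = LinearMap.id := by
        rw [h1, Matrix.toLin_one]
      rw [Matrix.toLin_mul b b b] at h2
      exact DFunLike.congr_fun h2 x
    obtain ⟨a, c, Hf⟩ := decomp f
    obtain ⟨a', c', Hf'⟩ := decomp f'
    obtain ⟨e1, e2⟩ : a' * a + c' * σ c - 1 = 0 ∧ a' * c + c' * σ a = 0 := by
      apply uniq
      intro x
      have h := hf'f x
      rw [Hf x, Hf' (a * x + c * σ x)] at h
      have hs : σ (a * x + c * σ x) = σ a * σ x + σ c * x := by
        rw [map_add, map_mul, map_mul, hσσ]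
      rw [hs] at h
      linear_combination h
    obtain ⟨e3, e4⟩ : a * a' + c * σ c' - 1 = 0 ∧ a * c' + c * σ a' = 0 := by
      apply uniq
      intro x
      have h := hff' x
      rw [Hf' x, Hf (a' * x + c' * σ x)] at h
      have hs : σ (a' * x + c' * σ x) = σ a' * σ x + σ c' * x := by
        rw [map_add, map_mul, map_mul, hσσ]
      rw [hs] at h
      linear_combination h
    have bridge : ∀ t t' : K, (∀ x, t * f (t' * x) = f' x) →
        (g⁻¹).val = Algebra.leftMulMatrix b t * g.val * Algebra.leftMulMatrix b t' := by
      intro t t' h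
      apply (Matrix.toLin b b).injective
      rw [Matrix.toLin_mul b b b, Matrix.toLin_mul b b b, Algebra.leftMulMatrix_apply,
        Algebra.leftMulMatrix_apply, Matrix.toLin_toMatrix, Matrix.toLin_toMatrix]
      ext x
      simp only [LinearMap.comp_apply, Algebra.coe_lmul_eq_mul, LinearMap.mul_apply']
      exact (h x).symm
    by_cases hc : c = 0
    · have h1 : a' * a = 1 := by
        rw [hc, map_zero] at e1
        linear_combination e1
      have ha : a ≠ 0 := by intro h; rw [h] at h1; simp at h1
      have ha' : a' ≠ 0 := by intro h; rw [h] at h1; simp at h1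
      have hc' : c' = 0 := by
        rw [hc] at e4
        have h2 : a * c' = 0 := by linear_combination e4
        rcases mul_eq_zero.mp h2 with h | h
        · exact absurd h ha
        · exact h
      refine ⟨a', a', ha', ha', bridge a' a' ?_⟩
      intro x
      rw [Hf (a' * x), Hf' x, hc, hc']
      linear_combination (a' * x) * h1
    · by_cases ha : a = 0
      · have ha' : a' = 0 := by
          rw [ha, map_zero] at e2
          have h2 : a' * c = 0 := by linear_combination e2
          rcases mul_eq_zero.mp h2 with h | h
          · exact h
          · exact absurd h hc
        have h1 : c' * σ c = 1 := by
          rw [ha] at e1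
          linear_combination e1
        have hc' : c' ≠ 0 := by intro h; rw [h] at h1; simp at h1
        refine ⟨c' * c⁻¹, 1, mul_ne_zero hc' (inv_ne_zero hc), one_ne_zero, bridge _ _ ?_⟩
        intro x
        rw [one_mul, Hf x, Hf' x, ha, ha']
        field_simp
        ring
      · have hσa : σ a ≠ 0 := fun h => ha (hσ0 a h)
        have ha' : a' ≠ 0 := by
          intro h
          rw [h] at e2 e1
          have hc'0 : c' = 0 := by
            have h2 : c' * σ a = 0 := by linear_combination e2
            rcases mul_eq_zero.mp h2 with h' | h'
            · exact h'
            · exact absurd h' hσa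
          rw [hc'0] at e1
          simp at e1
        have hσa' : σ a' ≠ 0 := fun h => ha' (hσ0 a' h)
        have hc' : c' ≠ 0 := by
          intro h
          rw [h] at e4
          have h2 : c * σ a' = 0 := by linear_combination e4
          rcases mul_eq_zero.mp h2 with h' | h'
          · exact absurd h' hc
          · exact absurd h' hσa'
        have ht'0 : a' * d ≠ 0 := mul_ne_zero ha' hd
        have hσt' : σ (a' * d) = -(σ a' * d) := by rw [map_mul, hσd]; ring
        have hden : c * σ (a' * d) ≠ 0 := by
          rw [hσt']
          exact mul_ne_zero hc (neg_ne_zero.mpr (mul_ne_zero hσa' hd))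
        have ht0 : c' * (c * σ (a' * d))⁻¹ ≠ 0 := mul_ne_zero hc' (inv_ne_zero hden)
        have hkey2 : (c' * (c * σ (a' * d))⁻¹) * (c * σ (a' * d)) = c' := by
          rw [mul_assoc, inv_mul_cancel₀ hden, mul_one]
        have hstep : c' * (a * (a' * d)) = a' * (c * σ (a' * d)) := by
          rw [hσt']
          linear_combination (a' * d) * e4
        have hkey1 : (c' * (c * σ (a' * d))⁻¹) * (a * (a' * d)) = a' := by
          rw [mul_comm c' ((c * σ (a' * d))⁻¹), mul_assoc, hstep,
            mul_comm a' (c * σ (a' * d)), ← mul_assoc, inv_mul_cancel₀ hden, one_mul]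
        refine ⟨c' * (c * σ (a' * d))⁻¹, a' * d, ht0, ht'0, bridge _ _ ?_⟩
        intro x
        have hexp : σ (a' * d * x) = σ (a' * d) * σ x := map_mul σ _ _
        rw [Hf ((a' * d) * x), Hf' x, hexp]
        linear_combination x * hkey1 + (σ x) * hkey2
  refine ⟨main, ?_⟩
  intro S hS
  have h1S : (1 : (Matrix (Fin 2) (Fin 2) k)ˣ) ∈ S := by
    apply hS
    exact ⟨1, one_ne_zero, by rw [map_one]; rfl⟩
  have hinv : ∀ g : (Matrix (Fin 2) (Fin 2) k)ˣ, g ∈ S → g⁻¹ ∈ S := by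
    intro g hg
    obtain ⟨t, t', ht, ht', hdecomp⟩ := main g
    have hMt : Algebra.leftMulMatrix b t * Algebra.leftMulMatrix b t⁻¹ = 1 := by
      rw [← map_mul, mul_inv_cancel₀ ht, map_one]
    have hMt2 : Algebra.leftMulMatrix b t⁻¹ * Algebra.leftMulMatrix b t = 1 := by
      rw [← map_mul, inv_mul_cancel₀ ht, map_one]
    have hMt' : Algebra.leftMulMatrix b t' * Algebra.leftMulMatrix b t'⁻¹ = 1 := by
      rw [← map_mul, mul_inv_cancel₀ ht', map_one]
    have hMt'2 : Algebra.leftMulMatrix b t'⁻¹ * Algebra.leftMulMatrix b t' = 1 := by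
      rw [← map_mul, inv_mul_cancel₀ ht', map_one]
    set ut : (Matrix (Fin 2) (Fin 2) k)ˣ :=
      ⟨Algebra.leftMulMatrix b t, Algebra.leftMulMatrix b t⁻¹, hMt, hMt2⟩ with hut
    set ut' : (Matrix (Fin 2) (Fin 2) k)ˣ :=
      ⟨Algebra.leftMulMatrix b t', Algebra.leftMulMatrix b t'⁻¹, hMt', hMt'2⟩ with hut'
    have heq : g⁻¹ = ut * g * ut' := by
      apply Units.ext
      rw [Units.val_mul, Units.val_mul]
      exact hdecomp
    rw [heq]
    exact S.mul_mem (S.mul_mem (hS ut ⟨t, ht, rfl⟩) hg) (hS ut' ⟨t', ht', rfl⟩)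
  exact ⟨{ toSubmonoid := { toSubsemigroup := S, one_mem' := h1S },
           inv_mem' := fun {x} hx => hinv x hx }, rfl⟩
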